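/- Let s ∈ {A,B}^ω be a balanced word with f_A(s) > 1/2, and let (𝒜, ℱ) be a subshift of finite type on ℤ^d whose forbidden patterns are nonempty. Then player A has a winning strategy in the non-alternating Domino game Γ_s(𝒜, ℱ, ℤ^d) if and only if ℱ ≠ ∅. Consequently NAGAME_s(ℤ^d) is decidable for such s. -/

import Mathlib

open Filter Topology

attribute [local instance] Classical.propDecidable

/-- The two players. -/
inductive Player | A | B
deriving DecidableEq

/-- A cell of the grid `ℤ^d`. -/
abbrev Cell (d : ℕ) := Fin d → ℤ

/-- A (possibly partial) colouring of the grid: `none` means uncoloured.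
Colours are natural numbers; the alphabet of size `m` is `{0, …, m-1}`. -/
abbrev Board (d : ℕ) := Cell d → Option ℕ

/-- A finite pattern, encoded as a list of tiles (cell, colour). -/
abbrev PatternCode (d : ℕ) := List (Cell d × ℕ)

/-- A move: `none` is a pass, `some (i, a)` colours cell `i` with colour `a`. -/
abbrev MoveD (d : ℕ) := Option (Cell d × ℕ)

/-- Code for an SFT: alphabet size together with the list of forbidden patterns. -/
abbrev SFTCode (d : ℕ) := ℕ × List (PatternCode d)

/-- A (positional) strategy: a move for every position. -/
abbrev Strategy (d : ℕ) := Board d → MoveD d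

def emptyBoard (d : ℕ) : Board d := fun _ => none

/-- The pattern `p` occurs in the board `x` translated by `t`. -/
def occursAt {d : ℕ} (p : PatternCode d) (x : Board d) (t : Cell d) : Prop :=
  ∀ q ∈ p, x (t + q.1) = some q.2

/-- A position is final when a translate of some forbidden pattern occurs. -/
def isFinal {d : ℕ} (F : List (PatternCode d)) (x : Board d) : Prop :=
  ∃ p ∈ F, ∃ t : Cell d, occursAt p x t

/-- Legality of a move in the game with alphabet `{0,…,m-1}` played on `E`:
a pass is always legal, and a colouring move must pick an uncoloured cell of `E`
and a colour of the alphabet. -/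
def legalMove {d : ℕ} (m : ℕ) (E : Set (Cell d)) (x : Board d) : MoveD d → Prop
  | none => True
  | some (i, a) => i ∈ E ∧ x i = none ∧ a < m

def applyMove {d : ℕ} (x : Board d) : MoveD d → Board d
  | none => x
  | some (i, a) => Function.update x i (some a)

/-- One step of the game: the move proposed by the strategy is played if legal
(an illegal move is treated as a pass). -/
noncomputable def step {d : ℕ} (m : ℕ) (E : Set (Cell d)) (st : Strategy d)
    (x : Board d) : Board d :=
  if legalMove m E x (st x) then applyMove x (st x) else x

/-- The play generated by strategies `stA`, `stB` with turn order `s`,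
starting from the empty board. -/
noncomputable def play {d : ℕ} (m : ℕ) (E : Set (Cell d)) (s : ℕ → Player)
    (stA stB : Strategy d) : ℕ → Board d
  | 0 => emptyBoard d
  | t + 1 => step m E (match s t with | .A => stA | .B => stB) (play m E s stA stB t)

/-- The alternating turn order: `A` plays first. -/
def alt : ℕ → Player := fun t => if t % 2 = 0 then .A else .B

/-- Player `A` has a winning strategy in the Domino game with turn order `s`:
a final position is eventually reached whatever `B` plays. -/
def AWins {d : ℕ} (m : ℕ) (F : List (PatternCode d)) (E : Set (Cell d))
    (s : ℕ → Player) : Prop :=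
  ∃ stA : Strategy d, ∀ stB : Strategy d, ∃ t : ℕ, isFinal F (play m E s stA stB t)

/-- Player `B` has a winning strategy in the Domino game with turn order `s`:
a final position is never reached whatever `A` plays. -/
def BWins {d : ℕ} (m : ℕ) (F : List (PatternCode d)) (E : Set (Cell d))
    (s : ℕ → Player) : Prop :=
  ∃ stB : Strategy d, ∀ stA : Strategy d, ∀ t : ℕ, ¬ isFinal F (play m E s stA stB t)

/-- The Domino game problem on `ℤ^d` (alternating turn order, `A` first). -/
def DGame (d : ℕ) : SFTCode d → Prop :=
  fun c => AWins c.1 c.2 Set.univ alt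

/-- The number of occurrences of the letter `A` in the factor `s_{⟦i, i+n⟧}`. -/
def countA (s : ℕ → Player) (i n : ℕ) : ℕ :=
  ((Finset.range (n + 1)).filter (fun l => s (i + l) = Player.A)).card

/-- The word `s` is balanced: any two factors of the same length have numbers of
occurrences of `A` differing by at most 1. -/
def BalancedWord (s : ℕ → Player) : Prop :=
  ∀ i j n : ℕ, ((countA s i n : ℤ) - (countA s j n : ℤ)).natAbs ≤ 1

/-- The non-alternating Domino game problem on `ℤ^d` with turn order `s`. -/
def NAGame (d : ℕ) (s : ℕ → Player) : SFTCode d → Prop :=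
  fun c => AWins c.1 c.2 Set.univ s

namespace NAGAux

section Counting

variable (s : ℕ → Player)

/-- Number of `A`s in the window `[T, T+ℓ)`. -/
def myA (T ℓ : ℕ) : ℕ := ∑ l ∈ Finset.range ℓ, (if s (T + l) = Player.A then 1 else 0)

/-- Number of `B`s in the window `[T, T+ℓ)`. -/
def myB (T ℓ : ℕ) : ℕ := ∑ l ∈ Finset.range ℓ, (if s (T + l) = Player.A then 0 else 1)

lemma myA_succ (T ℓ : ℕ) :
    myA s T (ℓ+1) = myA s T ℓ + (if s (T+ℓ) = Player.A then 1 else 0) :=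
  Finset.sum_range_succ _ _

lemma myB_succ (T ℓ : ℕ) :
    myB s T (ℓ+1) = myB s T ℓ + (if s (T+ℓ) = Player.A then 0 else 1) :=
  Finset.sum_range_succ _ _

lemma myA_add_myB (T ℓ : ℕ) : myA s T ℓ + myB s T ℓ = ℓ := by
  rw [myA, myB, ← Finset.sum_add_distrib]
  have : ∀ l ∈ Finset.range ℓ,
      ((if s (T + l) = Player.A then 1 else 0) + if s (T + l) = Player.A then 0 else 1) = 1 := by
    intro l _; split <;> rfl
  rw [Finset.sum_congr rfl this, Finset.sum_const, Finset.card_range, smul_eq_mul, mul_one]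

lemma myB_le (T ℓ : ℕ) : myB s T ℓ ≤ ℓ := by
  have := myA_add_myB s T ℓ; omega

lemma myB_mono (T : ℕ) {u v : ℕ} (h : u ≤ v) : myB s T u ≤ myB s T v := by
  induction v with
  | zero => have : u = 0 := by omega
            subst this; exact le_rfl
  | succ v ih =>
    rcases Nat.lt_or_ge u (v+1) with h' | h'
    · have := ih (by omega); rw [myB_succ]; split <;> omega
    · have : u = v + 1 := by omega
      subst this; exact le_rfl

lemma myA_eq_countA (T n : ℕ) : myA s T (n+1) = countA s T n := by
  rw [countA, Finset.card_filter]; rfl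

lemma myA_add (T u v : ℕ) : myA s T (u + v) = myA s T u + myA s (T + u) v := by
  induction v with
  | zero => simp [myA]
  | succ v ih =>
    have h1 : T + (u + v) = T + u + v := by omega
    rw [show u + (v+1) = (u+v)+1 from rfl, myA_succ, ih, myA_succ, h1, Nat.add_assoc]

lemma countA_balance {s : ℕ → Player} (hbal : BalancedWord s) (i j n : ℕ) :
    countA s i n ≤ countA s j n + 1 := by
  have h := hbal i j n
  omega

end Counting

end NAGAux
namespace NAGAux

section Freq

variable {s : ℕ → Player} {L : ℝ}

lemma L_le_one
    (hfreq : Tendsto (fun n : ℕ => (countA s 0 n : ℝ) / (n + 1)) atTop (𝓝 L)) :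
    L ≤ 1 := by
  apply le_of_tendsto hfreq
  filter_upwards with n
  have h1 : countA s 0 n ≤ n + 1 := by
    rw [countA]
    exact (Finset.card_filter_le _ _).trans (le_of_eq (Finset.card_range _))
  have h2 : (0:ℝ) < (n:ℝ) + 1 := by positivity
  rw [div_le_one h2]
  exact_mod_cast h1

lemma countA0_ge (hbal : BalancedWord s)
    (hfreq : Tendsto (fun n : ℕ => (countA s 0 n : ℝ) / (n + 1)) atTop (𝓝 L))
    (n : ℕ) : L * (n+1) - 1 ≤ (countA s 0 n : ℝ) := by
  set Nn := n + 1 with hNn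
  set a := countA s 0 n with ha
  have hNn1 : 1 ≤ Nn := by omega
  have hup : ∀ q : ℕ, myA s 0 ((q+1) * Nn) ≤ (q+1) * (a+1) := by
    intro q
    induction q with
    | zero =>
      have : myA s 0 Nn = a := myA_eq_countA s 0 n
      simp [this]
    | succ q ih =>
      have hsplit : myA s 0 ((q+2) * Nn) = myA s 0 ((q+1)*Nn) + myA s ((q+1)*Nn) Nn := by
        rw [show (q+2) * Nn = (q+1)*Nn + Nn by ring, myA_add]
        simp
      have hwin : myA s ((q+1)*Nn) Nn = countA s ((q+1)*Nn) n := myA_eq_countA s _ n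
      have hbd : countA s ((q+1)*Nn) n ≤ a + 1 := countA_balance hbal _ 0 n
      calc myA s 0 ((q+1+1) * Nn) = myA s 0 ((q+1)*Nn) + myA s ((q+1)*Nn) Nn := hsplit
        _ ≤ (q+1)*(a+1) + (a+1) := by rw [hwin]; exact Nat.add_le_add ih hbd
        _ = (q+1+1) * (a+1) := by ring
  have hsub : Tendsto (fun q : ℕ => (q+1) * Nn - 1) atTop atTop := by
    apply tendsto_atTop_mono _ tendsto_id
    intro q
    have : q + 1 ≤ (q+1) * Nn := Nat.le_mul_of_pos_right _ (by omega)
    simp only [id_eq]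
    omega
  have hle : L ≤ ((a:ℝ)+1)/Nn := by
    apply le_of_tendsto (hfreq.comp hsub)
    filter_upwards with q
    have hM : 1 ≤ (q+1) * Nn := Nat.one_le_iff_ne_zero.mpr (by positivity)
    have hMval : (q+1) * Nn - 1 + 1 = (q+1) * Nn := by omega
    have hnum : countA s 0 ((q+1) * Nn - 1) = myA s 0 ((q+1)*Nn) := by
      rw [← myA_eq_countA, hMval]
    show (countA s 0 ((q+1) * Nn - 1) : ℝ) / ((((q+1) * Nn - 1 : ℕ) : ℝ) + 1) ≤ _
    have hden : (((q+1) * Nn - 1 : ℕ) : ℝ) + 1 = ((q+1) * Nn : ℕ) := by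
      push_cast [hM]
      ring
    rw [hnum, hden]
    have hnum2 : (myA s 0 ((q+1)*Nn) : ℝ) ≤ ((q+1) * (a+1) : ℕ) := by
      exact_mod_cast hup q
    have hdenpos : (0:ℝ) < (((q+1) * Nn : ℕ) : ℝ) := by
      exact_mod_cast hM
    calc (myA s 0 ((q+1)*Nn) : ℝ) / (((q+1) * Nn : ℕ) : ℝ)
        ≤ (((q+1) * (a+1) : ℕ) : ℝ) / (((q+1) * Nn : ℕ) : ℝ) := by
          gcongr
      _ = ((a:ℝ)+1)/Nn := by
          push_cast
          rw [mul_div_mul_left]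
          positivity
  have hNnpos : (0:ℝ) < (Nn:ℝ) := by exact_mod_cast hNn1
  rw [le_div_iff₀ hNnpos] at hle
  have : (Nn:ℝ) = (n:ℝ) + 1 := by rw [hNn]; push_cast; ring
  rw [this] at hle
  linarith

lemma myA_ge (hbal : BalancedWord s)
    (hfreq : Tendsto (fun n : ℕ => (countA s 0 n : ℝ) / (n + 1)) atTop (𝓝 L))
    (T ℓ : ℕ) : L * ℓ - 2 ≤ (myA s T ℓ : ℝ) := by
  cases ℓ with
  | zero =>
    have hL1 := L_le_one hfreq
    norm_num [myA]
  | succ n =>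
    have h1 : countA s 0 n ≤ countA s T n + 1 := countA_balance hbal 0 T n
    have h2 := countA0_ge hbal hfreq n
    have h3 : myA s T (n+1) = countA s T n := myA_eq_countA s T n
    rw [h3]
    have h1' : (countA s 0 n : ℝ) ≤ (countA s T n : ℝ) + 1 := by exact_mod_cast h1
    push_cast
    linarith

lemma myB_le_real (hbal : BalancedWord s)
    (hfreq : Tendsto (fun n : ℕ => (countA s 0 n : ℝ) / (n + 1)) atTop (𝓝 L))
    (T ℓ : ℕ) : (myB s T ℓ : ℝ) ≤ (1 - L) * ℓ + 2 := by
  have h1 := myA_add_myB s T ℓ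
  have h2 := myA_ge hbal hfreq T ℓ
  have h1' : (myA s T ℓ : ℝ) + (myB s T ℓ : ℝ) = (ℓ : ℝ) := by exact_mod_cast h1
  linarith

end Freq

end NAGAux
namespace NAGAux

section Slots

variable {d : ℕ} (hd : 0 < d) (p : PatternCode d)

/-- Key-injectivity of a pattern: cells determine colours. -/
def keyInj (p : PatternCode d) : Prop :=
  ∀ q ∈ p, ∀ q' ∈ p, q.1 = q'.1 → q.2 = q'.2

def idx0 : Fin d := ⟨0, hd⟩

/-- Radius bound on the first coordinates of the pattern. -/
noncomputable def RR : ℕ := p.toFinset.sup fun q => (q.1 (idx0 hd)).natAbs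

noncomputable def DD : ℤ := 2 * (RR hd p) + 1

/-- Base point of the `j`-th slot. -/
noncomputable def base (j : ℕ) : Cell d :=
  fun i => if i = idx0 hd then (j : ℤ) * DD hd p else 0

noncomputable def slotCell (j : ℕ) (q : Cell d × ℕ) : Cell d := base hd p j + q.1

def inSlot (c : Cell d) (j : ℕ) : Prop := ∃ q ∈ p, c = slotCell hd p j q

lemma RR_bound {q : Cell d × ℕ} (hq : q ∈ p) : (q.1 (idx0 hd)).natAbs ≤ RR hd p := by
  rw [RR]
  exact Finset.le_sup (f := fun q : Cell d × ℕ => (q.1 (idx0 hd)).natAbs)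
    (List.mem_toFinset.mpr hq)

lemma slot_unique {c : Cell d} {j j' : ℕ} (h : inSlot hd p c j) (h' : inSlot hd p c j') :
    j = j' := by
  obtain ⟨q, hq, rfl⟩ := h
  obtain ⟨q', hq', he⟩ := h'
  have h0 := congrFun he (idx0 hd)
  have hb : ∀ (j : ℕ) (q : Cell d × ℕ), (slotCell hd p j q) (idx0 hd)
      = (j : ℤ) * DD hd p + q.1 (idx0 hd) := by
    intro j q
    show base hd p j (idx0 hd) + q.1 (idx0 hd) = _
    rw [base, if_pos rfl]
  rw [hb, hb] at h0
  have b1 := RR_bound hd p hq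
  have b2 := RR_bound hd p hq'
  have e1 : ((j : ℤ) - j') * DD hd p = q'.1 (idx0 hd) - q.1 (idx0 hd) := by linarith
  by_contra hne
  have hDnat : (DD hd p).natAbs = 2 * RR hd p + 1 := by
    rw [DD, show (2 * (RR hd p : ℤ) + 1) = ((2 * RR hd p + 1 : ℕ) : ℤ) by push_cast; ring]
    exact Int.natAbs_natCast _
  have hjj' : 1 ≤ ((j:ℤ) - j').natAbs := by
    have : (j : ℤ) ≠ (j' : ℤ) := by exact_mod_cast hne
    omega
  have hmul := congrArg Int.natAbs e1
  rw [Int.natAbs_mul, hDnat] at hmul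
  have h4 := Int.natAbs_sub_le (q'.1 (idx0 hd)) (q.1 (idx0 hd))
  have h5 : 1 * (2 * RR hd p + 1) ≤ ((j:ℤ) - j').natAbs * (2 * RR hd p + 1) :=
    Nat.mul_le_mul_right _ hjj'
  omega

lemma slotCell_injective (j : ℕ) {q q' : Cell d × ℕ}
    (h : slotCell hd p j q = slotCell hd p j q') : q.1 = q'.1 := by
  have := congrArg (fun c => c - base hd p j) h
  simpa [slotCell, add_sub_cancel_left] using this

end Slots

end NAGAux
namespace NAGAux

section BoardLemmas

variable {d : ℕ} (hd : 0 < d) (p : PatternCode d)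

/-- The `j`-th slot is clean: every coloured cell of it carries the right colour. -/
def clean (j : ℕ) (x : Board d) : Prop :=
  ∀ q ∈ p, ∀ a, x (slotCell hd p j q) = some a → a = q.2

/-- Height of the `j`-th slot: number of correctly coloured cells. -/
noncomputable def ht (j : ℕ) (x : Board d) : ℕ :=
  (p.toFinset.filter fun q => x (slotCell hd p j q) = some q.2).card

noncomputable def kk : ℕ := p.toFinset.card

noncomputable def Gset (N : ℕ) (x : Board d) : Finset ℕ :=
  (Finset.range N).filter fun j => clean hd p j x

noncomputable def cand (N : ℕ) (x : Board d) : Finset ℕ :=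
  (Finset.range N).filter fun j => clean hd p j x ∧ ht hd p j x < kk p

lemma kk_pos (hp : p ≠ []) : 0 < kk p := by
  rw [kk, Finset.card_pos]
  obtain ⟨q, hq⟩ := List.exists_mem_of_ne_nil p hp
  exact ⟨q, List.mem_toFinset.mpr hq⟩

lemma ht_le (j : ℕ) (x : Board d) : ht hd p j x ≤ kk p :=
  Finset.card_filter_le _ _

lemma ht_full {j : ℕ} {x : Board d} (h : ht hd p j x = kk p) :
    occursAt p x (base hd p j) := by
  have hsub : p.toFinset.filter (fun q => x (slotCell hd p j q) = some q.2) = p.toFinset :=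
    Finset.eq_of_subset_of_card_le (Finset.filter_subset _ _) (le_of_eq h.symm)
  intro q hq
  have : q ∈ p.toFinset.filter fun q => x (slotCell hd p j q) = some q.2 := by
    rw [hsub]; exact List.mem_toFinset.mpr hq
  exact (Finset.mem_filter.mp this).2

lemma exists_none_cell {j : ℕ} {x : Board d} (hcl : clean hd p j x)
    (hht : ht hd p j x < kk p) : ∃ q ∈ p, x (slotCell hd p j q) = none := by
  by_contra hno
  push_neg at hno
  have : p.toFinset ⊆ p.toFinset.filter fun q => x (slotCell hd p j q) = some q.2 := by
    intro q hq
    rw [Finset.mem_filter]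
    refine ⟨hq, ?_⟩
    have hq' := List.mem_toFinset.mp hq
    rcases h : x (slotCell hd p j q) with _ | a
    · exact absurd h (hno q hq')
    · rw [hcl q hq' a h]
  have := Finset.card_le_card this
  rw [ht] at hht
  rw [kk] at hht
  omega

/-- Extending the board preserves colours. -/
lemma update_keep {x : Board d} {c : Cell d} {a : ℕ} (hc : x c = none) :
    ∀ c' b, x c' = some b → Function.update x c (some a) c' = some b := by
  intro c' b hb
  have : c' ≠ c := fun h => by rw [h, hc] at hb; cases hb
  rw [Function.update_of_ne this]
  exact hb

lemma clean_of_ext {x y : Board d} (hxy : ∀ c b, x c = some b → y c = some b)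
    {j : ℕ} (hcl : clean hd p j y) : clean hd p j x := by
  intro q hq a ha
  exact hcl q hq a (hxy _ _ ha)

lemma ht_mono_ext {x y : Board d} (hxy : ∀ c b, x c = some b → y c = some b)
    (j : ℕ) : ht hd p j x ≤ ht hd p j y := by
  apply Finset.card_le_card
  intro q hq
  rw [Finset.mem_filter] at hq ⊢
  exact ⟨hq.1, hxy _ _ hq.2⟩

/-- Updating a cell outside slot `j` does not affect slot `j`. -/
lemma notin_slot_eq {x : Board d} {c : Cell d} {a : ℕ} {j : ℕ}
    (hc : ¬ inSlot hd p c j) :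
    (∀ q ∈ p, Function.update x c (some a) (slotCell hd p j q) = x (slotCell hd p j q)) := by
  intro q hq
  apply Function.update_of_ne
  intro h
  exact hc ⟨q, hq, h.symm⟩

lemma clean_update_notin {x : Board d} {c : Cell d} {a : ℕ} {j : ℕ}
    (hc : ¬ inSlot hd p c j) (hcl : clean hd p j x) :
    clean hd p j (Function.update x c (some a)) := by
  intro q hq b hb
  rw [notin_slot_eq hd p hc q hq] at hb
  exact hcl q hq b hb

lemma ht_update_notin {x : Board d} {c : Cell d} {a : ℕ} {j : ℕ}
    (hc : ¬ inSlot hd p c j) :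
    ht hd p j (Function.update x c (some a)) = ht hd p j x := by
  rw [ht, ht]
  congr 1
  apply Finset.filter_congr
  intro q hq
  rw [notin_slot_eq hd p hc q (List.mem_toFinset.mp hq)]

/-- The raising move: colouring an uncoloured cell of a clean slot with the correct
colour keeps it clean and increases its height by one. -/
lemma clean_update_raise (hinj : keyInj p) {x : Board d} {j : ℕ} {q0 : Cell d × ℕ}
    (hq0 : q0 ∈ p) (hcl : clean hd p j x) :
    clean hd p j (Function.update x (slotCell hd p j q0) (some q0.2)) := by
  intro q hq b hb
  by_cases hcell : slotCell hd p j q = slotCell hd p j q0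
  · rw [hcell, Function.update_self] at hb
    cases hb
    exact hinj q0 hq0 q hq (slotCell_injective hd p j hcell).symm
  · rw [Function.update_of_ne hcell] at hb
    exact hcl q hq b hb

lemma ht_update_raise (hinj : keyInj p) {x : Board d} {j : ℕ} {q0 : Cell d × ℕ}
    (hq0 : q0 ∈ p) (hnone : x (slotCell hd p j q0) = none) :
    ht hd p j (Function.update x (slotCell hd p j q0) (some q0.2))
      = ht hd p j x + 1 := by
  have hkey : ∀ q ∈ p, slotCell hd p j q = slotCell hd p j q0 → q = q0 := by
    intro q hq hcell
    have h1 := slotCell_injective hd p j hcell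
    have h2 := hinj q hq q0 hq0 h1
    exact Prod.ext h1 h2
  have hins : (p.toFinset.filter fun q =>
        Function.update x (slotCell hd p j q0) (some q0.2) (slotCell hd p j q) = some q.2)
      = insert q0 (p.toFinset.filter fun q => x (slotCell hd p j q) = some q.2) := by
    ext q
    rw [Finset.mem_insert, Finset.mem_filter, Finset.mem_filter]
    constructor
    · rintro ⟨hq, hval⟩
      by_cases hcell : slotCell hd p j q = slotCell hd p j q0
      · exact Or.inl (hkey q (List.mem_toFinset.mp hq) hcell)
      · rw [Function.update_of_ne hcell] at hval
        exact Or.inr ⟨hq, hval⟩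
    · rintro (rfl | ⟨hq, hval⟩)
      · exact ⟨List.mem_toFinset.mpr hq0, by rw [Function.update_self]⟩
      · refine ⟨hq, ?_⟩
        by_cases hcell : slotCell hd p j q = slotCell hd p j q0
        · rw [hkey q (List.mem_toFinset.mp hq) hcell] at hval
          rw [hnone] at hval
          cases hval
        · rw [Function.update_of_ne hcell]
          exact hval
  rw [ht, ht, hins, Finset.card_insert_of_notMem]
  rw [Finset.mem_filter]
  rintro ⟨-, hval⟩
  rw [hnone] at hval
  cases hval

end BoardLemmas

end NAGAux
namespace NAGAux

section Strat

variable {d : ℕ} (hd : 0 < d) (p : PatternCode d)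

noncomputable def pickj (N : ℕ) (x : Board d) : ℕ :=
  if hc : (cand hd p N x).Nonempty then
    (Finset.exists_min_image (cand hd p N x) (fun j => ht hd p j x) hc).choose
  else 0

lemma pickj_spec {N : ℕ} {x : Board d} (hc : (cand hd p N x).Nonempty) :
    pickj hd p N x ∈ cand hd p N x ∧
      ∀ j' ∈ cand hd p N x, ht hd p (pickj hd p N x) x ≤ ht hd p j' x := by
  rw [pickj, dif_pos hc]
  have h := (Finset.exists_min_image (cand hd p N x) (fun j => ht hd p j x) hc).choose_spec
  exact ⟨h.1, h.2⟩

/-- Player `A`'s strategy: add a correct colour to an uncoloured cell of a clean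
incomplete slot of minimal height. -/
noncomputable def stratA (N : ℕ) : Strategy d := fun x =>
  if hU : ∃ q ∈ p, x (slotCell hd p (pickj hd p N x) q) = none then
    some (slotCell hd p (pickj hd p N x) hU.choose, hU.choose.2)
  else none

/-- Any move of `stratA` is a correct colouring of an uncoloured cell of a slot. -/
lemma stratA_shape {N : ℕ} {x : Board d} {mv : Cell d × ℕ}
    (h : stratA hd p N x = some mv) :
    ∃ q ∈ p, x (slotCell hd p (pickj hd p N x) q) = none ∧
      mv = (slotCell hd p (pickj hd p N x) q, q.2) := by
  rw [stratA] at h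
  split at h
  · rename_i hU
    cases h
    exact ⟨hU.choose, hU.choose_spec.1, hU.choose_spec.2, rfl⟩
  · cases h

/-- When a candidate slot exists, `stratA` raises the minimal candidate slot. -/
lemma stratA_raises {N : ℕ} {x : Board d} (hc : (cand hd p N x).Nonempty) :
    ∃ q ∈ p, x (slotCell hd p (pickj hd p N x) q) = none ∧
      stratA hd p N x = some (slotCell hd p (pickj hd p N x) q, q.2) := by
  have hj := (pickj_spec hd p hc).1
  rw [cand, Finset.mem_filter] at hj
  have hU : ∃ q ∈ p, x (slotCell hd p (pickj hd p N x) q) = none :=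
    exists_none_cell hd p hj.2.1 hj.2.2
  rw [stratA, dif_pos hU]
  exact ⟨hU.choose, hU.choose_spec.1, hU.choose_spec.2, rfl⟩

lemma mem_Gset {N : ℕ} {x : Board d} {j : ℕ} :
    j ∈ Gset hd p N x ↔ j < N ∧ clean hd p j x := by
  rw [Gset, Finset.mem_filter, Finset.mem_range]

lemma mem_cand {N : ℕ} {x : Board d} {j : ℕ} :
    j ∈ cand hd p N x ↔ j < N ∧ clean hd p j x ∧ ht hd p j x < kk p := by
  rw [cand, Finset.mem_filter, Finset.mem_range]

lemma step_cases (m : ℕ) (st : Strategy d) (x : Board d) :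
    step m Set.univ st x = x ∨
      ∃ c a, x c = none ∧ a < m ∧ step m Set.univ st x = Function.update x c (some a) := by
  rw [step]
  split
  · rename_i hleg
    rcases h : st x with _ | ⟨c, a⟩
    · left; rfl
    · rw [h] at hleg
      obtain ⟨-, hnone, ha⟩ := hleg
      right
      exact ⟨c, a, hnone, ha, rfl⟩
  · left; rfl

end Strat

end NAGAux
namespace NAGAux

section Dynamics

variable {d : ℕ} (hd : 0 < d) (p : PatternCode d) (m N : ℕ) (s : ℕ → Player)
  (stB : Strategy d)

/-- The play against `stratA`. -/
noncomputable def XX (t : ℕ) : Board d := play m Set.univ s (stratA hd p N) stB t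

lemma step_none {m : ℕ} (st : Strategy d) (x : Board d) (h : st x = none) :
    step m Set.univ st x = x := by
  rw [step, h]
  simp [legalMove, applyMove]

lemma step_some {m : ℕ} (st : Strategy d) (x : Board d)
    (h : legalMove m Set.univ x (st x)) :
    step m Set.univ st x = applyMove x (st x) := if_pos h

lemma XX_succ_A {t : ℕ} (hA : s t = Player.A) :
    XX hd p m N s stB (t+1) = step m Set.univ (stratA hd p N) (XX hd p m N s stB t) := by
  rw [XX, XX, play, hA]

lemma XX_succ_B {t : ℕ} (hB : s t = Player.B) :
    XX hd p m N s stB (t+1) = step m Set.univ stB (XX hd p m N s stB t) := by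
  rw [XX, XX, play, hB]

lemma XX_cases (t : ℕ) :
    XX hd p m N s stB (t+1) = XX hd p m N s stB t ∨
      ∃ c a, XX hd p m N s stB t c = none ∧ a < m ∧
        XX hd p m N s stB (t+1) = Function.update (XX hd p m N s stB t) c (some a) := by
  rcases hst : s t with hA | hB
  · rw [XX_succ_A hd p m N s stB hst]
    exact step_cases m _ _
  · rw [XX_succ_B hd p m N s stB hst]
    exact step_cases m _ _

lemma XX_mono {t t' : ℕ} (h : t ≤ t') :
    ∀ c b, XX hd p m N s stB t c = some b → XX hd p m N s stB t' c = some b := by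
  induction t', h using Nat.le_induction with
  | base => exact fun c b hb => hb
  | succ t'' h ih =>
    intro c b hb
    rcases XX_cases hd p m N s stB t'' with heq | ⟨c', a', hnone, -, heq⟩
    · rw [heq]; exact ih c b hb
    · rw [heq]; exact update_keep hnone c b (ih c b hb)

lemma clean_anti {t t' : ℕ} (h : t ≤ t') {j : ℕ}
    (hcl : clean hd p j (XX hd p m N s stB t')) : clean hd p j (XX hd p m N s stB t) :=
  clean_of_ext hd p (XX_mono hd p m N s stB h) hcl

lemma ht_mono {t t' : ℕ} (h : t ≤ t') (j : ℕ) :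
    ht hd p j (XX hd p m N s stB t) ≤ ht hd p j (XX hd p m N s stB t') :=
  ht_mono_ext hd p (XX_mono hd p m N s stB h) j

lemma Gset_anti {t t' : ℕ} (h : t ≤ t') :
    Gset hd p N (XX hd p m N s stB t') ⊆ Gset hd p N (XX hd p m N s stB t) := by
  intro j hj
  rw [mem_Gset] at hj ⊢
  exact ⟨hj.1, clean_anti hd p m N s stB h hj.2⟩

lemma A_step_subset (hinj : keyInj p) (hcol : ∀ q ∈ p, q.2 < m) {t : ℕ}
    (hA : s t = Player.A) :
    Gset hd p N (XX hd p m N s stB t) ⊆ Gset hd p N (XX hd p m N s stB (t+1)) := by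
  set x := XX hd p m N s stB t with hx
  rw [XX_succ_A hd p m N s stB hA, ← hx]
  rcases hmv : stratA hd p N x with _ | mv
  · rw [step_none _ _ hmv]
  · obtain ⟨q, hq, hnone, rfl⟩ := stratA_shape hd p hmv
    have hleg : legalMove m Set.univ x (stratA hd p N x) := by
      rw [hmv]
      exact ⟨Set.mem_univ _, hnone, hcol q hq⟩
    rw [step_some _ _ hleg, hmv]
    intro j hj
    rw [mem_Gset] at hj ⊢
    refine ⟨hj.1, ?_⟩
    show clean hd p j (Function.update x _ (some q.2))
    by_cases hjj : j = pickj hd p N x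
    · subst hjj
      exact clean_update_raise hd p hinj hq hj.2
    · apply clean_update_notin hd p _ hj.2
      intro hin
      exact hjj (slot_unique hd p hin ⟨q, hq, rfl⟩)

lemma Gcard_step (hinj : keyInj p) (hcol : ∀ q ∈ p, q.2 < m) (t : ℕ) :
    (Gset hd p N (XX hd p m N s stB t)).card ≤
      (Gset hd p N (XX hd p m N s stB (t+1))).card +
        (if s t = Player.A then 0 else 1) := by
  rcases hst : s t with hA | hB
  · rw [if_pos rfl, Nat.add_zero]
    exact Finset.card_le_card (A_step_subset hd p m N s stB hinj hcol hst)
  · rw [if_neg (by simp)]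
    rcases XX_cases hd p m N s stB t with heq | ⟨c, a, hnone, -, heq⟩
    · rw [heq]; exact Nat.le_succ _
    · rw [heq]
      set x := XX hd p m N s stB t with hx
      by_cases hin : ∃ j0, inSlot hd p c j0
      · obtain ⟨j0, hj0⟩ := hin
        have hsub : Gset hd p N x ⊆ insert j0 (Gset hd p N (Function.update x c (some a))) := by
          intro j hj
          rw [Finset.mem_insert]
          by_cases hjj : j = j0
          · exact Or.inl hjj
          · right
            rw [mem_Gset] at hj ⊢
            refine ⟨hj.1, clean_update_notin hd p ?_ hj.2⟩
            intro hin'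
            exact hjj (slot_unique hd p hin' hj0)
        calc (Gset hd p N x).card ≤ _ := Finset.card_le_card hsub
          _ ≤ _ + 1 := Finset.card_insert_le _ _
      · apply le_trans (Finset.card_le_card _) (Nat.le_succ _)
        intro j hj
        rw [mem_Gset] at hj ⊢
        refine ⟨hj.1, clean_update_notin hd p ?_ hj.2⟩
        intro hin'
        exact hin ⟨j, hin'⟩

lemma Gcard_interval (hinj : keyInj p) (hcol : ∀ q ∈ p, q.2 < m) (T u : ℕ) :
    (Gset hd p N (XX hd p m N s stB T)).card ≤
      (Gset hd p N (XX hd p m N s stB (T+u))).card + myB s T u := by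
  induction u with
  | zero => simp [myB]
  | succ u ih =>
    have hstep := Gcard_step hd p m N s stB hinj hcol (T+u)
    rw [myB_succ]
    have e : T + (u+1) = T + u + 1 := rfl
    rw [e]
    by_cases hsp : s (T+u) = Player.A
    · rw [if_pos hsp] at hstep ⊢; omega
    · rw [if_neg hsp] at hstep ⊢; omega

end Dynamics

end NAGAux
namespace NAGAux

section Grand

variable {d : ℕ} (hd : 0 < d) (p : PatternCode d) (m N : ℕ) {s : ℕ → Player}
  (stB : Strategy d) {L : ℝ}

/-- The phase lemma: if at time `T` all clean slots have height at least `h`, then at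
some later time `T'` all clean slots have height at least `h+1`, and not too many
slots were spoiled in between. -/
lemma phase_lemma
    (hinj : keyInj p) (hcol : ∀ q ∈ p, q.2 < m)
    (hbal : BalancedWord s)
    (hfreq : Tendsto (fun n : ℕ => (countA s 0 n : ℝ) / (n + 1)) atTop (𝓝 L))
    (hL : 1 / 2 < L)
    (hNW : ∀ t j, ht hd p j (XX hd p m N s stB t) < kk p)
    {h T : ℕ} (hk : h < kk p)
    (hall : ∀ j ∈ Gset hd p N (XX hd p m N s stB T),
      h ≤ ht hd p j (XX hd p m N s stB T)) :
    ∃ T', T ≤ T' ∧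
      (∀ j ∈ Gset hd p N (XX hd p m N s stB T'),
        h + 1 ≤ ht hd p j (XX hd p m N s stB T')) ∧
      (2 - 1/L) * ((Gset hd p N (XX hd p m N s stB T)).card : ℝ) - (3/L + 3)
        ≤ ((Gset hd p N (XX hd p m N s stB T')).card : ℝ) := by
  have hL0 : (0:ℝ) < L := by linarith
  have hL1 : L ≤ 1 := L_le_one hfreq
  set n := (Gset hd p N (XX hd p m N s stB T)).card with hn
  set ℓ := ⌈((n:ℝ)+3)/L⌉₊ with hℓ
  -- the window of length ℓ contains more than n A-moves
  have hmyA : n + 1 ≤ myA s T ℓ := by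
    have h1 := myA_ge hbal hfreq T ℓ
    have h2 : ((n:ℝ)+3)/L ≤ (ℓ : ℝ) := Nat.le_ceil _
    have h3 : (n:ℝ) + 3 ≤ L * ℓ := by
      rw [div_le_iff₀ hL0] at h2; linarith
    have : ((n:ℝ)) + 1 ≤ (myA s T ℓ : ℝ) := by linarith
    exact_mod_cast this
  -- propagation of the height lower bound
  have hallt : ∀ t, T ≤ t → ∀ j ∈ Gset hd p N (XX hd p m N s stB t),
      h ≤ ht hd p j (XX hd p m N s stB t) := by
    intro t htt j hj
    exact le_trans (hall j (Gset_anti hd p m N s stB htt hj))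
      (ht_mono hd p m N s stB htt j)
  -- the set of clean slots of height exactly h
  set E : ℕ → Finset ℕ := fun t => (Gset hd p N (XX hd p m N s stB t)).filter
    (fun j => ht hd p j (XX hd p m N s stB t) = h) with hE
  have hEsub : ∀ t, T ≤ t → E (t+1) ⊆ E t := by
    intro t htt j hj
    rw [hE, Finset.mem_filter] at hj ⊢
    have hjG : j ∈ Gset hd p N (XX hd p m N s stB t) :=
      Gset_anti hd p m N s stB (Nat.le_succ t) hj.1
    refine ⟨hjG, le_antisymm ?_ (hallt t htt j hjG)⟩
    rw [← hj.2]
    exact ht_mono hd p m N s stB (Nat.le_succ t) j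
  have hEstepA : ∀ t, T ≤ t → s t = Player.A →
      (∃ j ∈ Gset hd p N (XX hd p m N s stB t), ht hd p j (XX hd p m N s stB t) ≤ h) →
      (E (t+1)).card + 1 ≤ (E t).card := by
    intro t htt hA ⟨j1, hj1G, hj1h⟩
    have hj1h' : ht hd p j1 (XX hd p m N s stB t) = h :=
      le_antisymm hj1h (hallt t htt j1 hj1G)
    have hj1c : j1 ∈ cand hd p N (XX hd p m N s stB t) := by
      rw [mem_cand]
      rw [mem_Gset] at hj1G
      exact ⟨hj1G.1, hj1G.2, hNW t j1⟩
    have hcne : (cand hd p N (XX hd p m N s stB t)).Nonempty := ⟨j1, hj1c⟩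
    obtain ⟨q, hq, hnone, hmv⟩ := stratA_raises hd p hcne
    set j0 := pickj hd p N (XX hd p m N s stB t) with hj0
    have hj0c := (pickj_spec hd p hcne).1
    have hj0min := (pickj_spec hd p hcne).2
    have hj0G : j0 ∈ Gset hd p N (XX hd p m N s stB t) := by
      rw [mem_Gset]; rw [mem_cand] at hj0c; exact ⟨hj0c.1, hj0c.2.1⟩
    have hj0h : ht hd p j0 (XX hd p m N s stB t) = h :=
      le_antisymm (by rw [← hj1h']; exact hj0min j1 hj1c) (hallt t htt j0 hj0G)
    have hleg : legalMove m Set.univ (XX hd p m N s stB t)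
        (stratA hd p N (XX hd p m N s stB t)) := by
      rw [hmv]
      exact ⟨Set.mem_univ _, hnone, hcol q hq⟩
    have hXs : XX hd p m N s stB (t+1)
        = Function.update (XX hd p m N s stB t) (slotCell hd p j0 q) (some q.2) := by
      rw [XX_succ_A hd p m N s stB hA, step_some _ _ hleg, hmv]
      rfl
    have hraise : ht hd p j0 (XX hd p m N s stB (t+1)) = h + 1 := by
      rw [hXs, ht_update_raise hd p hinj hq hnone, hj0h]
    have hj0E : j0 ∈ E t := by
      rw [hE, Finset.mem_filter]; exact ⟨hj0G, hj0h⟩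
    have hsub2 : E (t+1) ⊆ (E t).erase j0 := by
      intro j hj
      rw [Finset.mem_erase]
      refine ⟨?_, hEsub t htt hj⟩
      intro hjj
      rw [hE, Finset.mem_filter] at hj
      rw [hjj, hraise] at hj
      omega
    have := Finset.card_le_card hsub2
    rw [Finset.card_erase_of_mem hj0E] at this
    have hpos : 1 ≤ (E t).card := Finset.card_pos.mpr ⟨j0, hj0E⟩
    omega
  -- the counting argument
  have hcount : ∀ u, (∀ v, v ≤ u → ∃ j ∈ Gset hd p N (XX hd p m N s stB (T+v)),
        ht hd p j (XX hd p m N s stB (T+v)) ≤ h) →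
      (E (T+u)).card + myA s T u ≤ (E T).card := by
    intro u
    induction u with
    | zero => intro _; simp [myA]
    | succ u ih =>
      intro hcon
      have ih' := ih (fun v hv => hcon v (by omega))
      rw [myA_succ]
      have e : T + (u+1) = (T + u) + 1 := rfl
      rw [e]
      by_cases hA : s (T+u) = Player.A
      · have := hEstepA (T+u) (by omega) hA (hcon u (by omega))
        rw [if_pos hA]
        omega
      · have := Finset.card_le_card (hEsub (T+u) (by omega))
        rw [if_neg hA]
        omega
  -- there is a time in the window where the phase is over
  have hfound : ∃ v, v ≤ ℓ ∧ ∀ j ∈ Gset hd p N (XX hd p m N s stB (T+v)),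
      h + 1 ≤ ht hd p j (XX hd p m N s stB (T+v)) := by
    by_contra hnot
    push_neg at hnot
    have hcon : ∀ v, v ≤ ℓ → ∃ j ∈ Gset hd p N (XX hd p m N s stB (T+v)),
        ht hd p j (XX hd p m N s stB (T+v)) ≤ h := by
      intro v hv
      obtain ⟨j, hjG, hjh⟩ := hnot v hv
      exact ⟨j, hjG, by omega⟩
    have := hcount ℓ hcon
    have hET : (E T).card ≤ n := by
      rw [hn, hE]
      exact Finset.card_le_card (Finset.filter_subset _ _)
    omega
  obtain ⟨v, hv, hv2⟩ := hfound
  refine ⟨T + v, by omega, hv2, ?_⟩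
  -- the cardinality bound
  have hint := Gcard_interval hd p m N s stB hinj hcol T v
  have hmono := myB_mono s T hv
  have hmyB := myB_le_real hbal hfreq T ℓ
  have hceil : (ℓ : ℝ) ≤ ((n:ℝ)+3)/L + 1 := by
    rw [hℓ]
    exact le_of_lt (Nat.ceil_lt_add_one (by positivity))
  have c1 : (n : ℝ) ≤ ((Gset hd p N (XX hd p m N s stB (T+v))).card : ℝ) + (myB s T v : ℝ) := by
    exact_mod_cast hint
  have c2 : (myB s T v : ℝ) ≤ (myB s T ℓ : ℝ) := by exact_mod_cast hmono
  have e1 : (1-L) * (ℓ:ℝ) ≤ (1-L) * (((n:ℝ)+3)/L + 1) :=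
    mul_le_mul_of_nonneg_left hceil (by linarith)
  have e3 : (1-L) * (((n:ℝ)+3)/L) = ((n:ℝ)+3)/L - ((n:ℝ)+3) := by
    field_simp
  have e4 : ((n:ℝ)+3)/L = (n:ℝ)/L + 3/L := by ring
  have e5 : (2 - 1/L) * (n:ℝ) = 2*(n:ℝ) - (n:ℝ)/L := by ring
  rw [e4] at e3
  nlinarith [e1, e3, c1, c2, hmyB]

end Grand

end NAGAux
namespace NAGAux

section Main

variable {d : ℕ}

lemma grand_induction (hd : 0 < d) (p : PatternCode d) (m N : ℕ) {s : ℕ → Player}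
    (stB : Strategy d) {L : ℝ}
    (hinj : keyInj p) (hcol : ∀ q ∈ p, q.2 < m)
    (hbal : BalancedWord s)
    (hfreq : Tendsto (fun n : ℕ => (countA s 0 n : ℝ) / (n + 1)) atTop (𝓝 L))
    (hL : 1 / 2 < L)
    (hNW : ∀ t j, ht hd p j (XX hd p m N s stB t) < kk p) :
    ∀ h, h < kk p → ∃ T,
      (∀ j ∈ Gset hd p N (XX hd p m N s stB T), h ≤ ht hd p j (XX hd p m N s stB T)) ∧
      (2 - 1/L)^h * N - (3/L + 3) * h ≤ ((Gset hd p N (XX hd p m N s stB T)).card : ℝ) := by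
  have hL0 : (0:ℝ) < L := by linarith
  have hL1 : L ≤ 1 := L_le_one hfreq
  have hρ0 : (0:ℝ) < 2 - 1/L := by
    have : 1/L < 2 := by rw [div_lt_iff₀ hL0]; linarith
    linarith
  have hρ1 : 2 - 1/L ≤ 1 := by
    have : 1 ≤ 1/L := by rw [le_div_iff₀ hL0]; linarith
    linarith
  have hC0 : (0:ℝ) ≤ 3/L + 3 := by positivity
  intro h
  induction h with
  | zero =>
    intro _
    refine ⟨0, ?_, ?_⟩
    · intro j _; exact Nat.zero_le _
    · have hX0 : XX hd p m N s stB 0 = emptyBoard d := rfl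
      have hG0 : Gset hd p N (XX hd p m N s stB 0) = Finset.range N := by
        rw [hX0, Gset]
        apply Finset.filter_true_of_mem
        intro j _
        intro q hq a ha
        simp [emptyBoard] at ha
      rw [hG0, Finset.card_range]
      simp
  | succ h ih =>
    intro hhk
    obtain ⟨T, hall, hbd⟩ := ih (by omega)
    obtain ⟨T', -, hall', hbd'⟩ := phase_lemma hd p m N stB hinj hcol hbal hfreq hL hNW
      (by omega : h < kk p) hall
    refine ⟨T', hall', ?_⟩
    have s1 : (2 - 1/L) * ((2 - 1/L)^h * N - (3/L + 3) * h)
        ≤ (2 - 1/L) * ((Gset hd p N (XX hd p m N s stB T)).card : ℝ) :=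
      mul_le_mul_of_nonneg_left hbd (le_of_lt hρ0)
    have s2 : (2 - 1/L) * ((3/L + 3) * h) ≤ 1 * ((3/L + 3) * h) :=
      mul_le_mul_of_nonneg_right hρ1 (by positivity)
    have s3 : (2 - 1/L)^(h+1) * N = (2 - 1/L) * ((2 - 1/L)^h * N) := by ring
    push_cast
    linarith [hbd']

theorem main_win (hd : 0 < d) {s : ℕ → Player} {L : ℝ}
    (hbal : BalancedWord s)
    (hfreq : Tendsto (fun n : ℕ => (countA s 0 n : ℝ) / (n + 1)) atTop (𝓝 L))
    (hL : 1 / 2 < L)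
    (m : ℕ) (p : PatternCode d) (hp : p ≠ [])
    (hcol : ∀ q ∈ p, q.2 < m) (hinj : keyInj p) :
    ∃ stA : Strategy d, ∀ stB : Strategy d, ∃ t tr,
      occursAt p (play m Set.univ s stA stB t) tr := by
  have hL0 : (0:ℝ) < L := by linarith
  have hL1 : L ≤ 1 := L_le_one hfreq
  have hρ0 : (0:ℝ) < 2 - 1/L := by
    have : 1/L < 2 := by rw [div_lt_iff₀ hL0]; linarith
    linarith
  set k := kk p with hk
  have hk1 : 1 ≤ k := kk_pos p hp
  set g : ℕ := ⌈3/L⌉₊ with hg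
  have hg3 : (3:ℝ) ≤ L * g := by
    have h2 : 3/L ≤ (g : ℝ) := Nat.le_ceil _
    rw [div_le_iff₀ hL0] at h2
    linarith
  set N : ℕ := ⌈((3/L + 3) * (k-1) + g + 1) / (2 - 1/L)^(k-1)⌉₊ with hN
  have hNbd : (3/L + 3) * (k-1) + g + 1 ≤ (2 - 1/L)^(k-1) * N := by
    have h1 : ((3/L + 3) * (k-1) + g + 1) / (2 - 1/L)^(k-1) ≤ (N:ℝ) := Nat.le_ceil _
    rw [div_le_iff₀ (by positivity)] at h1
    linarith
  refine ⟨stratA hd p N, fun stB => ?_⟩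
  by_contra hno
  push_neg at hno
  have hNW : ∀ t j, ht hd p j (XX hd p m N s stB t) < kk p := by
    intro t j
    rcases lt_or_eq_of_le (ht_le hd p j (XX hd p m N s stB t)) with hlt | heq
    · exact hlt
    · exact absurd (ht_full hd p heq) (hno t (base hd p j))
  obtain ⟨T, hall, hbd⟩ := grand_induction hd p m N stB hinj hcol hbal hfreq hL hNW
    (k-1) (by omega)
  have hkc : ((k-1 : ℕ) : ℝ) = (k:ℝ) - 1 := by
    push_cast [hk1]
    ring
  rw [hkc] at hbd
  -- at time T there are at least g+1 clean slots, all of height ≥ k-1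
  have hcardT : g + 1 ≤ (Gset hd p N (XX hd p m N s stB T)).card := by
    have : ((g:ℝ) + 1) ≤ ((Gset hd p N (XX hd p m N s stB T)).card : ℝ) := by
      calc ((g:ℝ) + 1) ≤ (2 - 1/L)^(k-1) * N - (3/L + 3) * (k-1) := by linarith
        _ ≤ _ := hbd
    exact_mod_cast this
  -- find an A-turn within the next g steps
  have hAex : ∃ u, u < g ∧ s (T + u) = Player.A := by
    by_contra hnone
    push_neg at hnone
    have hzero : myA s T g = 0 := by
      rw [myA]
      apply Finset.sum_eq_zero
      intro l hl
      rw [Finset.mem_range] at hl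
      rw [if_neg (hnone l hl)]
    have := myA_ge hbal hfreq T g
    rw [hzero] at this
    norm_num at this
    linarith
  obtain ⟨u, hu, hA⟩ := hAex
  set t := T + u with ht'
  -- at time t there is still a clean slot
  have hint := Gcard_interval hd p m N s stB hinj hcol T u
  have hmyBu : myB s T u ≤ u := myB_le s T u
  have hGpos : 0 < (Gset hd p N (XX hd p m N s stB t)).card := by
    rw [ht']; omega
  obtain ⟨j1, hj1⟩ := Finset.card_pos.mp hGpos
  have hj1c : j1 ∈ cand hd p N (XX hd p m N s stB t) := by
    rw [mem_cand]
    rw [mem_Gset] at hj1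
    exact ⟨hj1.1, hj1.2, hNW t j1⟩
  have hcne : (cand hd p N (XX hd p m N s stB t)).Nonempty := ⟨j1, hj1c⟩
  obtain ⟨q, hq, hnone, hmv⟩ := stratA_raises hd p hcne
  set j0 := pickj hd p N (XX hd p m N s stB t) with hj0
  have hj0c := (pickj_spec hd p hcne).1
  have hj0G : j0 ∈ Gset hd p N (XX hd p m N s stB t) := by
    rw [mem_Gset]; rw [mem_cand] at hj0c; exact ⟨hj0c.1, hj0c.2.1⟩
  -- height of j0 at time t is exactly k-1
  have hj0lo : k - 1 ≤ ht hd p j0 (XX hd p m N s stB t) := by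
    have hj0GT : j0 ∈ Gset hd p N (XX hd p m N s stB T) :=
      Gset_anti hd p m N s stB (by omega) hj0G
    exact le_trans (hall j0 hj0GT) (ht_mono hd p m N s stB (by omega) j0)
  have hj0hi := hNW t j0
  have hj0eq : ht hd p j0 (XX hd p m N s stB t) = k - 1 := by omega
  -- A's move at time t completes the slot
  have hleg : legalMove m Set.univ (XX hd p m N s stB t)
      (stratA hd p N (XX hd p m N s stB t)) := by
    rw [hmv]
    exact ⟨Set.mem_univ _, hnone, hcol q hq⟩
  have hXs : XX hd p m N s stB (t+1)
      = Function.update (XX hd p m N s stB t) (slotCell hd p j0 q) (some q.2) := by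
    rw [XX_succ_A hd p m N s stB hA, step_some _ _ hleg, hmv]
    rfl
  have hraise : ht hd p j0 (XX hd p m N s stB (t+1)) = k := by
    rw [hXs, ht_update_raise hd p hinj hq hnone, hj0eq]
    omega
  exact absurd hraise (Nat.ne_of_lt (hNW (t+1) j0))

end Main

end NAGAux
namespace NAGAux

section Char

variable {d : ℕ}

lemma play_colors (m : ℕ) (s : ℕ → Player) (stA stB : Strategy d) :
    ∀ t c a, play m Set.univ s stA stB t c = some a → a < m := by
  intro t
  induction t with
  | zero =>
    intro c a ha
    simp [play, emptyBoard] at ha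
  | succ t ih =>
    intro c a ha
    have hstep := step_cases m (match s t with | .A => stA | .B => stB)
      (play m Set.univ s stA stB t)
    have hXs : play m Set.univ s stA stB (t+1)
        = step m Set.univ (match s t with | .A => stA | .B => stB)
            (play m Set.univ s stA stB t) := rfl
    rcases hstep with heq | ⟨c', a', hnone, ha', heq⟩
    · rw [hXs, heq] at ha
      exact ih c a ha
    · rw [hXs, heq] at ha
      by_cases hc : c = c'
      · subst hc
        rw [Function.update_self] at ha
        cases ha
        exact ha'
      · rw [Function.update_of_ne hc] at ha
        exact ih c a ha

/-- Characterisation of the games won by `A`: some forbidden pattern is realizable. -/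
lemma awins_char (hd : 0 < d) {s : ℕ → Player} {L : ℝ}
    (hbal : BalancedWord s)
    (hfreq : Tendsto (fun n : ℕ => (countA s 0 n : ℝ) / (n + 1)) atTop (𝓝 L))
    (hL : 1 / 2 < L) (m : ℕ) (F : List (PatternCode d)) :
    AWins m F Set.univ s ↔ ∃ p ∈ F, (∀ q ∈ p, q.2 < m) ∧ keyInj p := by
  constructor
  · rintro ⟨stA, hw⟩
    obtain ⟨t, pp, hppF, tr, hocc⟩ := hw (fun _ => none)
    refine ⟨pp, hppF, ?_, ?_⟩
    · intro q hq
      exact play_colors m s stA _ t _ _ (hocc q hq)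
    · intro q hq q' hq' hkey
      have h1 := hocc q hq
      have h2 := hocc q' hq'
      rw [hkey] at h1
      rw [h1] at h2
      exact Option.some.inj h2
  · rintro ⟨pp, hppF, hcol, hinj⟩
    by_cases hp : pp = []
    · subst hp
      refine ⟨fun _ => none, fun stB => ⟨0, [], hppF, 0, ?_⟩⟩
      intro q hq
      exact absurd hq List.not_mem_nil
    · obtain ⟨stA, hwin⟩ := main_win hd hbal hfreq hL m pp hp hcol hinj
      refine ⟨stA, fun stB => ?_⟩
      obtain ⟨t, tr, hocc⟩ := hwin stB
      exact ⟨t, pp, hppF, tr, hocc⟩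

end Char

end NAGAux
namespace NAGAux

section Comp

lemma primrec_list_any {α β : Type} [Primcodable α] [Primcodable β]
    {f : α → List β} {pr : α → β → Bool} (hf : Primrec f) (hp : Primrec₂ pr) :
    Primrec fun a => (f a).any (pr a) := by
  have hh : Primrec₂ (fun (a : α) (bs : β × Bool) => pr a bs.1 || bs.2) :=
    Primrec.or.comp (hp.comp Primrec.fst (Primrec.fst.comp Primrec.snd))
      (Primrec.snd.comp Primrec.snd)
  have h := Primrec.list_foldr hf (Primrec.const false) hh
  apply h.of_eq
  intro a
  induction f a with
  | nil => rfl
  | cons b l ih => simp [List.any_cons, ih]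

lemma primrec_list_all {α β : Type} [Primcodable α] [Primcodable β]
    {f : α → List β} {pr : α → β → Bool} (hf : Primrec f) (hp : Primrec₂ pr) :
    Primrec fun a => (f a).all (pr a) := by
  have hh : Primrec₂ (fun (a : α) (bs : β × Bool) => pr a bs.1 && bs.2) :=
    Primrec.and.comp (hp.comp Primrec.fst (Primrec.fst.comp Primrec.snd))
      (Primrec.snd.comp Primrec.snd)
  have h := Primrec.list_foldr hf (Primrec.const true) hh
  apply h.of_eq
  intro a
  induction f a with
  | nil => rfl
  | cons b l ih => simp [List.all_cons, ih]

variable {d : ℕ}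

/-- Decision procedure for the games won by `A`. -/
def decF (c : SFTCode d) : Bool :=
  c.2.any fun pp =>
    (pp.all fun q => decide (q.2 < c.1)) &&
    (pp.all fun q => pp.all fun q' => !(decide (q.1 = q'.1)) || decide (q.2 = q'.2))

lemma decF_eq_true (c : SFTCode d) :
    decF c = true ↔ ∃ p ∈ c.2, (∀ q ∈ p, q.2 < c.1) ∧ keyInj p := by
  simp only [decF, List.any_eq_true, List.all_eq_true, Bool.and_eq_true, Bool.or_eq_true,
    Bool.not_eq_true', decide_eq_true_eq, decide_eq_false_iff_not, keyInj]
  constructor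
  · rintro ⟨p, hp, h1, h2⟩
    refine ⟨p, hp, h1, ?_⟩
    intro q hq q' hq' hkey
    rcases h2 q hq q' hq' with h | h
    · exact absurd hkey h
    · exact h
  · rintro ⟨p, hp, h1, h2⟩
    refine ⟨p, hp, h1, ?_⟩
    intro q hq q' hq'
    by_cases hkey : q.1 = q'.1
    · exact Or.inr (h2 q hq q' hq' hkey)
    · exact Or.inl hkey

lemma primrec_decF : Primrec (decF (d := d)) := by
  have h1 : Primrec₂ (fun (c : SFTCode d) (pp : PatternCode d) =>
      pp.all fun q => decide (q.2 < c.1)) := by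
    have hin : Primrec₂ fun (cp : SFTCode d × PatternCode d) (q : Cell d × ℕ) =>
        decide (q.2 < cp.1.1) :=
      (Primrec.nat_lt.comp (Primrec.snd.comp Primrec.snd)
        (Primrec.fst.comp (Primrec.fst.comp Primrec.fst))).decide
    exact primrec_list_all (f := fun cp : SFTCode d × PatternCode d => cp.2)
      Primrec.snd hin
  have h2 : Primrec (fun pp : PatternCode d =>
      pp.all fun q => pp.all fun q' => !(decide (q.1 = q'.1)) || decide (q.2 = q'.2)) := by
    have hin : Primrec₂ fun (ppq : PatternCode d × (Cell d × ℕ)) (q' : Cell d × ℕ) =>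
        !(decide (ppq.2.1 = q'.1)) || decide (ppq.2.2 = q'.2) := by
      have hA : Primrec fun (x : (PatternCode d × (Cell d × ℕ)) × (Cell d × ℕ)) =>
          decide (x.1.2.1 = x.2.1) :=
        (Primrec.eq.comp (Primrec.fst.comp (Primrec.snd.comp Primrec.fst))
          (Primrec.fst.comp Primrec.snd)).decide
      have hB : Primrec fun (x : (PatternCode d × (Cell d × ℕ)) × (Cell d × ℕ)) =>
          decide (x.1.2.2 = x.2.2) :=
        (Primrec.eq.comp (Primrec.snd.comp (Primrec.snd.comp Primrec.fst))
          (Primrec.snd.comp Primrec.snd)).decide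
      exact Primrec.or.comp (Primrec.not.comp hA) hB
    have hmid : Primrec₂ fun (pp : PatternCode d) (q : Cell d × ℕ) =>
        pp.all fun q' => !(decide (q.1 = q'.1)) || decide (q.2 = q'.2) :=
      primrec_list_all (f := fun ppq : PatternCode d × (Cell d × ℕ) => ppq.1)
        Primrec.fst hin
    exact primrec_list_all (f := fun pp : PatternCode d => pp) Primrec.id hmid
  have h3 : Primrec₂ (fun (c : SFTCode d) (pp : PatternCode d) =>
      (pp.all fun q => decide (q.2 < c.1)) &&
      (pp.all fun q => pp.all fun q' => !(decide (q.1 = q'.1)) || decide (q.2 = q'.2))) :=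
    Primrec.and.comp h1 (h2.comp Primrec.snd)
  exact primrec_list_any Primrec.snd h3

end Comp

end NAGAux
/-- Let `s` be a balanced word with frequency `f_A(s) > 1/2`. For
every SFT on `ℤ^d` (with nonempty alphabet, whose forbidden patterns are genuine
nonempty patterns over the alphabet), `A` wins `Γ_s(𝒜, ℱ, ℤ^d)` iff `ℱ ≠ ∅`.
Consequently `NAGAME_s(ℤ^d)` is decidable. -/
theorem nagame_highFrequency (d : ℕ) (hd : 0 < d) (s : ℕ → Player)
    (hbal : BalancedWord s) (L : ℝ)
    (hfreq : Tendsto (fun n : ℕ => (countA s 0 n : ℝ) / (n + 1)) atTop (𝓝 L))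
    (hL : 1 / 2 < L) :
    (∀ (m : ℕ) (F : List (PatternCode d)), 0 < m →
      (∀ p ∈ F, ∀ q ∈ p, q.2 < m) →
      (∀ p ∈ F, ∀ q ∈ p, ∀ q' ∈ p, q.1 = q'.1 → q.2 = q'.2) →
      (∀ p ∈ F, p ≠ []) →
      (AWins m F Set.univ s ↔ F ≠ [])) ∧
    ComputablePred (NAGame d s) := by
  constructor
  · intro m F _ hcolF hconsF _
    constructor
    · rintro ⟨stA, hw⟩ hFnil
      subst hFnil
      obtain ⟨t, pp, hpp, -⟩ := hw (fun _ => none)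
      exact absurd hpp List.not_mem_nil
    · intro hF
      rw [NAGAux.awins_char hd hbal hfreq hL m F]
      obtain ⟨pp, hppF⟩ := List.exists_mem_of_ne_nil F hF
      exact ⟨pp, hppF, hcolF pp hppF, hconsF pp hppF⟩
  · rw [ComputablePred.computable_iff]
    refine ⟨NAGAux.decF, NAGAux.primrec_decF.to_comp, ?_⟩
    funext c
    apply propext
    exact (NAGAux.awins_char hd hbal hfreq hL c.1 c.2).trans
      (NAGAux.decF_eq_true c).symm
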